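/- Assume every net in the family has at most 3 elements and that d_w(v) > 0 for every v in C0. Then there exists a proper subset C of C0 with u in C and cut(C)/d_w(C) < cut(C0)/d_w(C0) if and only if there exists an s-t cut of the clique-expansion flow graph G_f whose weight is strictly less than cut(C0)·d_w(C0) (by the max-flow min-cut theorem, this is equivalently the statement of Theorem 3.2 that the maximum s-t flow on G_f is less than cut(C0)·d_w(C0)). -/

import Mathlib

open scoped ENNReal

namespace Stmt0

/-- Nodes of the flow graph: the elements of `C0` (via `base`), a source `s`
(with which the contracted node `r` is identified) and a sink `t`. -/
inductive Node (α : Type*) where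
  | base : α → Node α
  | s : Node α
  | t : Node α
  deriving DecidableEq

variable {α ι : Type*} [DecidableEq α] [DecidableEq ι]

/-- `cut C` : total weight of the nets containing an element of `C` and an
element of `(C0 ∪ {r}) \ C`. -/
def cut (C0 : Finset α) (r : α) (Nets : Finset ι) (net : ι → Finset α) (w : ι → ℝ)
    (C : Finset α) : ℝ :=
  ∑ i ∈ Nets.filter
      (fun i => (net i ∩ C).Nonempty ∧ (net i ∩ (insert r C0 \ C)).Nonempty), w i

/-- weighted degree `d_w(v)` : total weight of the nets containing `v`. -/
def dw (Nets : Finset ι) (net : ι → Finset α) (w : ι → ℝ) (v : α) : ℝ :=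
  ∑ i ∈ Nets.filter (fun i => v ∈ net i), w i

/-- weighted volume `d_w(C)`. -/
def dwS (Nets : Finset ι) (net : ι → Finset α) (w : ι → ℝ) (C : Finset α) : ℝ :=
  ∑ v ∈ C, dw Nets net w v

/-- Capacities of the clique-expansion flow graph `G_f`. -/
noncomputable def cliqueCap (C0 : Finset α) (r u : α) (Nets : Finset ι)
    (net : ι → Finset α) (w : ι → ℝ) : Node α → Node α → ℝ≥0∞
  | Node.base a, Node.base b =>
      if a ∈ C0 ∧ b ∈ C0 ∧ a ≠ b then
        ENNReal.ofReal (dwS Nets net w C0 *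
          ∑ i ∈ Nets.filter (fun i => a ∈ net i ∧ b ∈ net i),
            w i / (((net i).card : ℝ) - 1))
      else 0
  | Node.s, Node.base b =>
      if b ∈ C0 then
        ENNReal.ofReal (dwS Nets net w C0 *
          ∑ i ∈ Nets.filter (fun i => r ∈ net i ∧ b ∈ net i),
            w i / (((net i).card : ℝ) - 1))
      else 0
  | Node.base a, Node.t =>
      if a ∈ C0 then
        (if a = u then ⊤
         else ENNReal.ofReal (cut C0 r Nets net w C0 * dw Nets net w a))
      else 0
  | _, _ => 0

/-- The node set of the flow graph: `C0 ∪ {s, t}`. -/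
def nodeSet (C0 : Finset α) : Finset (Node α) :=
  C0.image Node.base ∪ {Node.s, Node.t}

noncomputable def S (Nets : Finset ι) (net : ι → Finset α) (w : ι → ℝ) (x b : α) : ℝ :=
  ∑ i ∈ Nets.filter (fun i => x ∈ net i ∧ b ∈ net i), w i / (((net i).card : ℝ) - 1)

lemma sum_ite_card (s t : Finset α) (c : ℝ) :
    ∑ x ∈ s, (if x ∈ t then c else 0) = ((s ∩ t).card : ℝ) * c := by
  rw [Finset.sum_ite_mem, Finset.sum_const, nsmul_eq_mul]

lemma double_sum_ite (X C e : Finset α) (c : ℝ) :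
    ∑ x ∈ X, ∑ b ∈ C, (if x ∈ e ∧ b ∈ e then c else 0)
      = ((X ∩ e).card : ℝ) * (((C ∩ e).card : ℝ) * c) := by
  rw [← sum_ite_card X e]
  refine Finset.sum_congr rfl fun x _ => ?_
  by_cases hx : x ∈ e
  · simp only [hx, true_and, if_true]
    exact sum_ite_card C e c
  · simp [hx]

lemma pernet {e C C0 : Finset α} {r : α} (hr : r ∉ C0) (hC : C ⊆ C0)
    (he : e ⊆ insert r C0) (h2 : 2 ≤ e.card) (h3 : e.card ≤ 3) (wv : ℝ) :
    (if ((e ∩ C).Nonempty ∧ (e ∩ (insert r C0 \ C)).Nonempty) then wv else 0)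
      = ((insert r (C0 \ C) ∩ e).card : ℝ) * (((C ∩ e).card : ℝ) * (wv / ((e.card : ℝ) - 1))) := by
  have hrC : r ∉ C := fun h => hr (hC h)
  have h1 : insert r (C0 \ C) ∩ e = e \ C := by
    ext a
    simp only [Finset.mem_inter, Finset.mem_insert, Finset.mem_sdiff]
    constructor
    · rintro ⟨h, ha⟩
      refine ⟨ha, ?_⟩
      rcases h with rfl | ⟨_, h⟩
      exacts [hrC, h]
    · rintro ⟨ha, hna⟩
      have := he ha
      simp only [Finset.mem_insert] at this
      tauto
  have h1' : e ∩ (insert r C0 \ C) = e \ C := by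
    ext a
    simp only [Finset.mem_inter, Finset.mem_sdiff, Finset.mem_insert]
    constructor
    · rintro ⟨ha, _, hna⟩; exact ⟨ha, hna⟩
    · rintro ⟨ha, hna⟩
      have := he ha
      simp only [Finset.mem_insert] at this
      exact ⟨ha, this, hna⟩
  have h2' : C ∩ e = e ∩ C := Finset.inter_comm _ _
  rw [h1, h1', h2']
  have hpq : (e ∩ C).card + (e \ C).card = e.card := Finset.card_inter_add_card_sdiff e C
  simp only [← Finset.card_pos]
  obtain ⟨p, q, hp, hq⟩ : ∃ p q, (e ∩ C).card = p ∧ (e \ C).card = q := ⟨_, _, rfl, rfl⟩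
  rw [hp, hq] at hpq ⊢
  obtain hk | hk : e.card = 2 ∨ e.card = 3 := by omega
  · rw [hk]
    obtain ⟨rfl, rfl⟩ | ⟨rfl, rfl⟩ | ⟨rfl, rfl⟩ :
        (p = 0 ∧ q = 2) ∨ (p = 1 ∧ q = 1) ∨ (p = 2 ∧ q = 0) := by omega
    all_goals norm_num
  · rw [hk]
    obtain ⟨rfl, rfl⟩ | ⟨rfl, rfl⟩ | ⟨rfl, rfl⟩ | ⟨rfl, rfl⟩ :
        (p = 0 ∧ q = 3) ∨ (p = 1 ∧ q = 2) ∨ (p = 2 ∧ q = 1) ∨ (p = 3 ∧ q = 0) := by omega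
    all_goals norm_num
    all_goals ring

lemma keysum (C0 : Finset α) (r : α) (hr : r ∉ C0)
    (Nets : Finset ι) (net : ι → Finset α) (w : ι → ℝ)
    (hsub : ∀ i ∈ Nets, net i ⊆ insert r C0)
    (hcard : ∀ i ∈ Nets, 2 ≤ (net i).card)
    (hsize : ∀ i ∈ Nets, (net i).card ≤ 3)
    (C : Finset α) (hC : C ⊆ C0) :
    (∑ b ∈ C, S Nets net w r b) + ∑ a ∈ C0 \ C, ∑ b ∈ C, S Nets net w a b
      = cut C0 r Nets net w C := by
  have hrX : r ∉ C0 \ C := fun h => hr (Finset.mem_sdiff.1 h).1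
  calc (∑ b ∈ C, S Nets net w r b) + ∑ a ∈ C0 \ C, ∑ b ∈ C, S Nets net w a b
      = ∑ x ∈ insert r (C0 \ C), ∑ b ∈ C, S Nets net w x b := by
        rw [Finset.sum_insert hrX]
    _ = ∑ x ∈ insert r (C0 \ C), ∑ i ∈ Nets, ∑ b ∈ C,
          (if x ∈ net i ∧ b ∈ net i then w i / (((net i).card : ℝ) - 1) else 0) := by
        refine Finset.sum_congr rfl fun x _ => ?_
        rw [Finset.sum_comm]
        refine Finset.sum_congr rfl fun b _ => ?_
        rw [S, Finset.sum_filter]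
    _ = ∑ i ∈ Nets, ∑ x ∈ insert r (C0 \ C), ∑ b ∈ C,
          (if x ∈ net i ∧ b ∈ net i then w i / (((net i).card : ℝ) - 1) else 0) :=
        Finset.sum_comm
    _ = ∑ i ∈ Nets, (if ((net i ∩ C).Nonempty ∧ (net i ∩ (insert r C0 \ C)).Nonempty)
          then w i else 0) := by
        refine Finset.sum_congr rfl fun i hi => ?_
        rw [double_sum_ite]
        exact (pernet hr hC (hsub i hi) (hcard i hi) (hsize i hi) (w i)).symm
    _ = cut C0 r Nets net w C := by rw [cut, Finset.sum_filter]

lemma dw_nonneg (Nets : Finset ι) (net : ι → Finset α) (w : ι → ℝ)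
    (hw : ∀ i ∈ Nets, 0 < w i) (v : α) : 0 ≤ dw Nets net w v :=
  Finset.sum_nonneg fun i hi => (hw i (Finset.mem_of_mem_filter i hi)).le

lemma dwS_nonneg (Nets : Finset ι) (net : ι → Finset α) (w : ι → ℝ)
    (hw : ∀ i ∈ Nets, 0 < w i) (C : Finset α) : 0 ≤ dwS Nets net w C :=
  Finset.sum_nonneg fun v _ => dw_nonneg Nets net w hw v

lemma cut_nonneg (C0 : Finset α) (r : α) (Nets : Finset ι) (net : ι → Finset α) (w : ι → ℝ)
    (hw : ∀ i ∈ Nets, 0 < w i) (C : Finset α) : 0 ≤ cut C0 r Nets net w C :=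
  Finset.sum_nonneg fun i hi => (hw i (Finset.mem_of_mem_filter i hi)).le

lemma S_nonneg (Nets : Finset ι) (net : ι → Finset α) (w : ι → ℝ)
    (hw : ∀ i ∈ Nets, 0 < w i) (hcard : ∀ i ∈ Nets, 2 ≤ (net i).card) (x b : α) :
    0 ≤ S Nets net w x b := by
  refine Finset.sum_nonneg fun i hi => ?_
  have hi' := Finset.mem_of_mem_filter i hi
  have h2 : (2 : ℝ) ≤ ((net i).card : ℝ) := by exact_mod_cast hcard i hi'
  exact div_nonneg (hw i hi').le (by linarith)

noncomputable def realCap (C0 : Finset α) (r : α) (Nets : Finset ι)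
    (net : ι → Finset α) (w : ι → ℝ) : Node α → Node α → ℝ
  | Node.base a, Node.base b =>
      if a ∈ C0 ∧ b ∈ C0 ∧ a ≠ b then dwS Nets net w C0 * S Nets net w a b else 0
  | Node.s, Node.base b =>
      if b ∈ C0 then dwS Nets net w C0 * S Nets net w r b else 0
  | Node.base a, Node.t =>
      if a ∈ C0 then cut C0 r Nets net w C0 * dw Nets net w a else 0
  | _, _ => 0

lemma realCap_nonneg (C0 : Finset α) (r : α) (Nets : Finset ι)
    (net : ι → Finset α) (w : ι → ℝ)
    (hw : ∀ i ∈ Nets, 0 < w i) (hcard : ∀ i ∈ Nets, 2 ≤ (net i).card)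
    (x y : Node α) : 0 ≤ realCap C0 r Nets net w x y := by
  have hD := dwS_nonneg Nets net w hw C0
  have hcut := cut_nonneg C0 r Nets net w hw C0
  rcases x with a | _ | _ <;> rcases y with b | _ | _ <;> simp only [realCap] <;>
    try exact le_rfl
  · split_ifs
    · exact mul_nonneg hD (S_nonneg Nets net w hw hcard a b)
    · exact le_rfl
  · split_ifs
    · exact mul_nonneg hcut (dw_nonneg Nets net w hw a)
    · exact le_rfl
  · split_ifs
    · exact mul_nonneg hD (S_nonneg Nets net w hw hcard r b)
    · exact le_rfl

lemma cliqueCap_eq (C0 : Finset α) (r u : α) (Nets : Finset ι)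
    (net : ι → Finset α) (w : ι → ℝ) (x y : Node α)
    (h : ¬(x = Node.base u ∧ y = Node.t)) :
    cliqueCap C0 r u Nets net w x y = ENNReal.ofReal (realCap C0 r Nets net w x y) := by
  rcases x with a | _ | _ <;> rcases y with b | _ | _ <;>
    simp only [cliqueCap, realCap, S, ENNReal.ofReal_zero]
  · split_ifs <;> simp
  · have hau : a ≠ u := by
      intro h'
      exact h ⟨by rw [h'], rfl⟩
    split_ifs <;> simp_all
  · split_ifs <;> simp

set_option maxHeartbeats 800000 in
lemma weight_eq (C0 : Finset α) (u r : α) (hr : r ∉ C0)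
    (Nets : Finset ι) (net : ι → Finset α) (w : ι → ℝ)
    (hsub : ∀ i ∈ Nets, net i ⊆ insert r C0)
    (hcard : ∀ i ∈ Nets, 2 ≤ (net i).card)
    (hsize : ∀ i ∈ Nets, (net i).card ≤ 3)
    (hw : ∀ i ∈ Nets, 0 < w i)
    (C : Finset α) (hC : C ⊆ C0) (huC : u ∈ C) :
    ∑ x ∈ insert Node.s ((C0 \ C).image Node.base),
      ∑ y ∈ insert Node.t (C.image Node.base), cliqueCap C0 r u Nets net w x y
    = ENNReal.ofReal (dwS Nets net w C0 * cut C0 r Nets net w C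
        + cut C0 r Nets net w C0 * dwS Nets net w (C0 \ C)) := by
  have hsB : Node.s ∉ (C0 \ C).image (Node.base : α → Node α) := by simp
  have htB : Node.t ∉ C.image (Node.base : α → Node α) := by simp
  have hnn : ∀ x y : Node α, 0 ≤ realCap C0 r Nets net w x y :=
    realCap_nonneg C0 r Nets net w hw hcard
  -- step A+B : convert to ofReal of real double sum
  have stepAB : ∑ x ∈ insert Node.s ((C0 \ C).image Node.base),
      ∑ y ∈ insert Node.t (C.image Node.base), cliqueCap C0 r u Nets net w x y
      = ENNReal.ofReal (∑ x ∈ insert Node.s ((C0 \ C).image Node.base),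
          ∑ y ∈ insert Node.t (C.image Node.base), realCap C0 r Nets net w x y) := by
    rw [ENNReal.ofReal_sum_of_nonneg
      (fun x _ => Finset.sum_nonneg fun y _ => hnn x y)]
    refine Finset.sum_congr rfl fun x hx => ?_
    rw [ENNReal.ofReal_sum_of_nonneg (fun y _ => hnn x y)]
    refine Finset.sum_congr rfl fun y hy => ?_
    apply cliqueCap_eq
    rintro ⟨rfl, rfl⟩
    simp only [Finset.mem_insert, Finset.mem_image, Finset.mem_sdiff] at hx
    rcases hx with hx | ⟨a, ⟨_, haC⟩, ha⟩
    · exact nomatch hx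
    · injection ha with ha'
      exact haC (ha' ▸ huC)
  rw [stepAB]
  congr 1
  -- real computation
  have hinj1 : ∀ x ∈ C0 \ C, ∀ y ∈ C0 \ C, Node.base x = Node.base y → x = y :=
    fun x _ y _ h => by injection h
  have hinj2 : ∀ x ∈ C, ∀ y ∈ C, Node.base x = Node.base y → x = y :=
    fun x _ y _ h => by injection h
  have inner : ∀ x : Node α, ∑ y ∈ insert Node.t (C.image Node.base),
      realCap C0 r Nets net w x y
      = realCap C0 r Nets net w x Node.t + ∑ b ∈ C, realCap C0 r Nets net w x (Node.base b) :=
    fun x => by rw [Finset.sum_insert htB, Finset.sum_image hinj2]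
  rw [Finset.sum_insert hsB, Finset.sum_image hinj1, inner Node.s]
  have e2 : ∑ a ∈ C0 \ C, ∑ y ∈ insert Node.t (C.image Node.base),
      realCap C0 r Nets net w (Node.base a) y
      = ∑ a ∈ C0 \ C, (realCap C0 r Nets net w (Node.base a) Node.t
          + ∑ b ∈ C, realCap C0 r Nets net w (Node.base a) (Node.base b)) :=
    Finset.sum_congr rfl fun a _ => inner (Node.base a)
  rw [e2]
  have hst : realCap C0 r Nets net w Node.s Node.t = 0 := rfl
  have hs_eval : ∀ b ∈ C, realCap C0 r Nets net w Node.s (Node.base b)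
      = dwS Nets net w C0 * S Nets net w r b := fun b hb => by
    simp only [realCap, if_pos (hC hb)]
  have ht_eval : ∀ a ∈ C0 \ C, realCap C0 r Nets net w (Node.base a) Node.t
      = cut C0 r Nets net w C0 * dw Nets net w a := fun a ha => by
    simp only [realCap]
    rw [if_pos (Finset.mem_sdiff.1 ha).1]
  have hbb : ∀ a ∈ C0 \ C, ∀ b ∈ C, realCap C0 r Nets net w (Node.base a) (Node.base b)
      = dwS Nets net w C0 * S Nets net w a b := fun a ha b hb => by
    obtain ⟨haC0, haC⟩ := Finset.mem_sdiff.1 ha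
    simp only [realCap]
    rw [if_pos ⟨haC0, hC hb, fun h => haC (h ▸ hb)⟩]
  have EA : ∑ b ∈ C, realCap C0 r Nets net w Node.s (Node.base b)
      = dwS Nets net w C0 * ∑ b ∈ C, S Nets net w r b := by
    rw [Finset.mul_sum]
    exact Finset.sum_congr rfl hs_eval
  have EB : ∑ a ∈ C0 \ C, (realCap C0 r Nets net w (Node.base a) Node.t
        + ∑ b ∈ C, realCap C0 r Nets net w (Node.base a) (Node.base b))
      = cut C0 r Nets net w C0 * dwS Nets net w (C0 \ C)
        + dwS Nets net w C0 * ∑ a ∈ C0 \ C, ∑ b ∈ C, S Nets net w a b := by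
    rw [Finset.sum_add_distrib]
    congr 1
    · rw [dwS, Finset.mul_sum]
      exact Finset.sum_congr rfl ht_eval
    · rw [Finset.mul_sum]
      refine Finset.sum_congr rfl fun a ha => ?_
      rw [Finset.mul_sum]
      exact Finset.sum_congr rfl (hbb a ha)
  rw [hst, EA, EB, zero_add, ← keysum C0 r hr Nets net w hsub hcard hsize C hC]
  ring

lemma mem_nodeSet_base {C0 : Finset α} {a : α} : Node.base a ∈ nodeSet C0 ↔ a ∈ C0 := by
  simp [nodeSet]

/-- There is a proper subset `C ⊂ C0` containing the seed node `u` with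
`cut(C)/d_w(C) < cut(C0)/d_w(C0)` iff there is an s-t cut of the
clique-expansion flow graph of weight strictly less than `cut(C0)·d_w(C0)`. -/
theorem clique_expansion_maxflow_iff
    (C0 : Finset α) (u r : α) (hu : u ∈ C0) (hr : r ∉ C0)
    (Nets : Finset ι) (net : ι → Finset α) (w : ι → ℝ)
    (hsub : ∀ i ∈ Nets, net i ⊆ insert r C0)
    (hcard : ∀ i ∈ Nets, 2 ≤ (net i).card)
    (hsize : ∀ i ∈ Nets, (net i).card ≤ 3)
    (hw : ∀ i ∈ Nets, 0 < w i)
    (hdw : ∀ v ∈ C0, 0 < dw Nets net w v) :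
    (∃ C : Finset α, C ⊂ C0 ∧ u ∈ C ∧
        cut C0 r Nets net w C / dwS Nets net w C <
          cut C0 r Nets net w C0 / dwS Nets net w C0) ↔
    (∃ B1 B2 : Finset (Node α),
        B1 ∪ B2 = nodeSet C0 ∧ Disjoint B1 B2 ∧
        Node.s ∈ B1 ∧ Node.t ∈ B2 ∧
        (∑ x ∈ B1, ∑ y ∈ B2, cliqueCap C0 r u Nets net w x y) <
          ENNReal.ofReal (cut C0 r Nets net w C0 * dwS Nets net w C0)) := by
  have hD : 0 < dwS Nets net w C0 := Finset.sum_pos (fun v hv => hdw v hv) ⟨u, hu⟩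
  have hcut0 : 0 ≤ cut C0 r Nets net w C0 := cut_nonneg C0 r Nets net w hw C0
  constructor
  · rintro ⟨C, hCss, huC, hlt⟩
    have hC : C ⊆ C0 := hCss.subset
    have hdC : 0 < dwS Nets net w C := Finset.sum_pos (fun v hv => hdw v (hC hv)) ⟨u, huC⟩
    refine ⟨insert Node.s ((C0 \ C).image Node.base), insert Node.t (C.image Node.base),
      ?_, ?_, Finset.mem_insert_self _ _, Finset.mem_insert_self _ _, ?_⟩
    · ext x
      rcases x with a | _ | _ <;>
        simp only [nodeSet, Finset.mem_union, Finset.mem_insert, Finset.mem_image,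
          Finset.mem_sdiff, Finset.mem_singleton, Node.base.injEq, reduceCtorEq,
          exists_eq_right, or_false, false_or, or_true, true_or, iff_true]
      have := @hC a
      tauto
    · rw [Finset.disjoint_left]
      intro x hx hx'
      simp only [Finset.mem_insert, Finset.mem_image, Finset.mem_sdiff] at hx hx'
      rcases x with a | _ | _
      · rcases hx with h | ⟨b, ⟨_, hbC⟩, hb⟩
        · exact nomatch h
        rcases hx' with h' | ⟨c, hcC, hc⟩
        · exact nomatch h'
        injection hb with hb
        injection hc with hc
        exact hbC (hb ▸ hc ▸ hcC)
      · rcases hx' with h' | ⟨c, _, hc⟩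
        · exact nomatch h'
        · exact nomatch hc
      · rcases hx with h | ⟨b, _, hb⟩
        · exact nomatch h
        · exact nomatch hb
    · rw [weight_eq C0 u r hr Nets net w hsub hcard hsize hw C hC huC]
      have hsd : dwS Nets net w (C0 \ C) + dwS Nets net w C = dwS Nets net w C0 :=
        Finset.sum_sdiff hC
      have hkey : cut C0 r Nets net w C * dwS Nets net w C0
          < cut C0 r Nets net w C0 * dwS Nets net w C := (div_lt_div_iff₀ hdC hD).1 hlt
      apply (ENNReal.ofReal_lt_ofReal_iff_of_nonneg ?_).2
      · nlinarith [hkey, hsd]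
      · have h1 : 0 ≤ dwS Nets net w (C0 \ C) := dwS_nonneg Nets net w hw _
        have h2 : 0 ≤ cut C0 r Nets net w C := cut_nonneg C0 r Nets net w hw C
        nlinarith
  · rintro ⟨B1, B2, hun, hdisj, hs, ht, hlt⟩
    set C := C0.filter (fun a => Node.base a ∈ B2) with hCdef
    have hC : C ⊆ C0 := Finset.filter_subset _ _
    have hbu : Node.base u ∈ B2 := by
      by_contra hbu
      have hbu1 : Node.base u ∈ B1 := by
        have h1 : Node.base u ∈ B1 ∪ B2 := by
          rw [hun]; exact mem_nodeSet_base.2 hu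
        rcases Finset.mem_union.1 h1 with h | h
        · exact h
        · exact absurd h hbu
      have htop : cliqueCap C0 r u Nets net w (Node.base u) Node.t = ⊤ := by
        simp [cliqueCap, hu]
      have hge : (⊤ : ℝ≥0∞) ≤ ∑ x ∈ B1, ∑ y ∈ B2, cliqueCap C0 r u Nets net w x y := by
        calc (⊤ : ℝ≥0∞) = cliqueCap C0 r u Nets net w (Node.base u) Node.t := htop.symm
          _ ≤ ∑ y ∈ B2, cliqueCap C0 r u Nets net w (Node.base u) y :=
              Finset.single_le_sum (fun _ _ => zero_le) ht
          _ ≤ ∑ x ∈ B1, ∑ y ∈ B2, cliqueCap C0 r u Nets net w x y :=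
              Finset.single_le_sum
                (f := fun x => ∑ y ∈ B2, cliqueCap C0 r u Nets net w x y)
                (fun _ _ => zero_le) hbu1
      exact not_top_lt (lt_of_le_of_lt hge hlt)
    have huC : u ∈ C := Finset.mem_filter.2 ⟨hu, hbu⟩
    have hdC : 0 < dwS Nets net w C := Finset.sum_pos (fun v hv => hdw v (hC hv)) ⟨u, huC⟩
    have hsB2 : Node.s ∉ B2 := Finset.disjoint_left.1 hdisj hs
    have htB1 : Node.t ∉ B1 := fun h => Finset.disjoint_left.1 hdisj h ht
    have hB2 : B2 = insert Node.t (C.image Node.base) := by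
      ext x
      have hx : x ∈ B1 ∪ B2 ↔ x ∈ nodeSet C0 := by rw [hun]
      rcases x with a | _ | _
      · simp only [Finset.mem_insert, Finset.mem_image, hCdef, Finset.mem_filter,
          reduceCtorEq, false_or]
        constructor
        · intro h
          have haC0 : a ∈ C0 := mem_nodeSet_base.1 (hx.1 (Finset.mem_union_right _ h))
          exact ⟨a, ⟨haC0, h⟩, rfl⟩
        · rintro ⟨b, ⟨hb0, hb2⟩, hb⟩
          injection hb with hb
          exact hb ▸ hb2
      · simp only [Finset.mem_insert, Finset.mem_image, reduceCtorEq, false_or,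
          exists_false, iff_false, and_false]
        exact fun h => (by exact hsB2 h : False)
      · simp only [Finset.mem_insert, Finset.mem_image, and_false, exists_false,
          or_false, true_or, iff_true]
        exact ht
    have hB1 : B1 = insert Node.s ((C0 \ C).image Node.base) := by
      ext x
      have hx : x ∈ B1 ∪ B2 ↔ x ∈ nodeSet C0 := by rw [hun]
      have hnotB2 : ∀ z, z ∈ B1 → z ∉ B2 := fun z h => Finset.disjoint_left.1 hdisj h
      rcases x with a | _ | _
      · simp only [Finset.mem_insert, Finset.mem_image, Finset.mem_sdiff,
          reduceCtorEq, false_or]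
        constructor
        · intro h
          have haC0 : a ∈ C0 := mem_nodeSet_base.1 (hx.1 (Finset.mem_union_left _ h))
          have haC : a ∉ C := fun hc => hnotB2 _ h (Finset.mem_filter.1 hc).2
          exact ⟨a, ⟨haC0, haC⟩, rfl⟩
        · rintro ⟨b, ⟨hb0, hbC⟩, hb⟩
          injection hb with hb
          subst hb
          have h1 : Node.base b ∈ B1 ∪ B2 := hx.2 (mem_nodeSet_base.2 hb0)
          rcases Finset.mem_union.1 h1 with h | h
          · exact h
          · exact absurd (Finset.mem_filter.2 ⟨hb0, h⟩) hbC
      · simp only [Finset.mem_insert, Finset.mem_image, reduceCtorEq, and_false,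
          exists_false, or_false, true_or, iff_true]
        exact hs
      · simp only [Finset.mem_insert, Finset.mem_image, reduceCtorEq, and_false,
          exists_false, or_false, false_or, iff_false]
        exact htB1
    rw [hB1, hB2, weight_eq C0 u r hr Nets net w hsub hcard hsize hw C hC huC] at hlt
    have h1 : 0 ≤ dwS Nets net w (C0 \ C) := dwS_nonneg Nets net w hw _
    have h2 : 0 ≤ cut C0 r Nets net w C := cut_nonneg C0 r Nets net w hw C
    have hlt' : dwS Nets net w C0 * cut C0 r Nets net w C
        + cut C0 r Nets net w C0 * dwS Nets net w (C0 \ C)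
        < cut C0 r Nets net w C0 * dwS Nets net w C0 := by
      have := (ENNReal.ofReal_lt_ofReal_iff_of_nonneg (by nlinarith)).1 hlt
      exact this
    have hsd : dwS Nets net w (C0 \ C) + dwS Nets net w C = dwS Nets net w C0 :=
      Finset.sum_sdiff hC
    have hkey : dwS Nets net w C0 * cut C0 r Nets net w C
        < cut C0 r Nets net w C0 * dwS Nets net w C := by nlinarith
    have hCne : C ≠ C0 := by
      intro h
      rw [h] at hkey
      nlinarith
    refine ⟨C, Finset.ssubset_iff_subset_ne.2 ⟨hC, hCne⟩, huC, ?_⟩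
    rw [div_lt_div_iff₀ hdC hD]
    nlinarith
end Stmt0
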